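/- Let A ∈ ℝ^{n×n} be nonzero with ‖A‖_∞ ≤ 1, and let θ ∈ (0, 1/2). Then there exist vectors u, v ∈ ℝⁿ with ‖u‖₂ ≤ 1 and ‖v‖₂ ≤ 1, such that every nonzero coordinate of u and of v has absolute value at least θ/√n, and ⟨Au, v⟩ ≥ (1 − 2θ)‖A‖. Consequently ‖u‖₁ · ‖v‖₁ ≥ (1 − 2θ)‖A‖, and hence at least one of ‖u‖₁, ‖v‖₁ is at least √((1 − 2θ)‖A‖). -/

import Mathlib

open Matrix Finset
open scoped Classical
open scoped RealInnerProductSpace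


noncomputable def trunc {n : ℕ} (w : EuclideanSpace ℝ (Fin n)) (t : ℝ) :
    EuclideanSpace ℝ (Fin n) :=
  WithLp.toLp 2 (fun i => if |w i| < t then 0 else w i)

lemma euclid_norm_eq {n : ℕ} (w : EuclideanSpace ℝ (Fin n)) :
    ‖w‖ = Real.sqrt (∑ i, w i ^ 2) := by
  rw [EuclideanSpace.norm_eq]
  congr 1
  exact Finset.sum_congr rfl fun i _ => by rw [Real.norm_eq_abs, sq_abs]

lemma trunc_norm_le {n : ℕ} (w : EuclideanSpace ℝ (Fin n)) (t : ℝ) :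
    ‖trunc w t‖ ≤ ‖w‖ := by
  rw [euclid_norm_eq, euclid_norm_eq]
  apply Real.sqrt_le_sqrt
  apply Finset.sum_le_sum
  intro i _
  by_cases h : |w i| < t <;> simp [trunc, h] <;> positivity

lemma trunc_diff_le {n : ℕ} (w : EuclideanSpace ℝ (Fin n)) (t : ℝ) (ht : 0 ≤ t) :
    ‖w - trunc w t‖ ≤ Real.sqrt n * t := by
  rw [euclid_norm_eq]
  have h1 : ∀ i, (w - trunc w t) i ^ 2 ≤ t ^ 2 := by
    intro i
    have : (w - trunc w t) i = w i - trunc w t i := rfl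
    rw [this]
    by_cases h : |w i| < t
    · simp only [trunc, WithLp.ofLp_toLp, if_pos h, sub_zero]
      calc w i ^ 2 = |w i| ^ 2 := (sq_abs _).symm
      _ ≤ t ^ 2 := by nlinarith [abs_nonneg (w i)]
    · simp only [trunc, WithLp.ofLp_toLp, if_neg h, sub_self]
      nlinarith [sq_nonneg t]
  calc Real.sqrt (∑ i, (w - trunc w t) i ^ 2) ≤ Real.sqrt (∑ _i : Fin n, t ^ 2) :=
        Real.sqrt_le_sqrt (Finset.sum_le_sum fun i _ => h1 i)
    _ = Real.sqrt n * t := by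
        rw [Finset.sum_const, card_univ, Fintype.card_fin, nsmul_eq_mul]
        rw [Real.sqrt_mul (by positivity), Real.sqrt_sq ht]

lemma exists_norm_attained {n : ℕ} (hn : 0 < n)
    (T : EuclideanSpace ℝ (Fin n) →L[ℝ] EuclideanSpace ℝ (Fin n)) :
    ∃ x : EuclideanSpace ℝ (Fin n), ‖x‖ = 1 ∧ ‖T x‖ = ‖T‖ := by
  have hne : (Metric.sphere (0 : EuclideanSpace ℝ (Fin n)) 1).Nonempty := by
    refine ⟨EuclideanSpace.single ⟨0, hn⟩ (1:ℝ), ?_⟩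
    simp [EuclideanSpace.norm_single]
  obtain ⟨x, hx, hmax⟩ := (isCompact_sphere (0 : EuclideanSpace ℝ (Fin n)) 1).exists_isMaxOn
    hne (Continuous.norm (T.continuous.comp continuous_id)).continuousOn
  have hx1 : ‖x‖ = 1 := by simpa using hx
  refine ⟨x, hx1, le_antisymm ?_ ?_⟩
  · have := T.le_opNorm x
    rw [hx1, mul_one] at this
    exact this
  apply T.opNorm_le_bound (norm_nonneg _)
  intro y
  rcases eq_or_ne y 0 with rfl | hy
  · simp
  · have hyn : ‖y‖ ≠ 0 := norm_ne_zero_iff.mpr hy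
    have hmem : (‖y‖⁻¹ • y) ∈ Metric.sphere (0 : EuclideanSpace ℝ (Fin n)) 1 := by
      simp [norm_smul, abs_of_nonneg (inv_nonneg.mpr (norm_nonneg y)), inv_mul_cancel₀ hyn]
    have := hmax hmem
    simp only [Set.mem_setOf_eq, Function.comp, id] at this
    rw [T.map_smul, norm_smul] at this
    simp only [norm_inv, norm_norm] at this
    have hyp : 0 < ‖y‖ := (norm_nonneg y).lt_of_ne' hyn
    calc ‖T y‖ = ‖y‖ * (‖y‖⁻¹ * ‖T y‖) := by field_simp
    _ ≤ ‖y‖ * ‖T x‖ := by nlinarith [norm_nonneg (T y)]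
    _ = ‖T x‖ * ‖y‖ := mul_comm _ _


/-- The operator norm (largest singular value) of a real matrix, viewed as a linear map
`ℓ²ⁿ → ℓ²ⁿ`. -/
noncomputable def opNorm {n : ℕ} (A : Matrix (Fin n) (Fin n) ℝ) : ℝ :=
  ‖LinearMap.toContinuousLinearMap (Matrix.toEuclideanLin A)‖

/-- For a nonzero matrix with entries bounded by `1` there are unit-ball vectors `u, v` whose
nonzero coordinates all have absolute value at least `θ/√n`, with `⟨Au, v⟩ ≥ (1-2θ)‖A‖`;
consequently `‖u‖₁‖v‖₁ ≥ (1-2θ)‖A‖` and one of `‖u‖₁, ‖v‖₁` is at least `√((1-2θ)‖A‖)`. -/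
theorem stmt18 {n : ℕ} (A : Matrix (Fin n) (Fin n) ℝ) (hA : A ≠ 0)
    (hAinf : ∀ i j, |A i j| ≤ 1) (θ : ℝ) (hθ0 : 0 < θ) (hθ : θ < 1 / 2) :
    ∃ u v : Fin n → ℝ,
      Real.sqrt (∑ i, u i ^ 2) ≤ 1 ∧ Real.sqrt (∑ i, v i ^ 2) ≤ 1 ∧
      (∀ i, u i ≠ 0 → θ / Real.sqrt n ≤ |u i|) ∧
      (∀ i, v i ≠ 0 → θ / Real.sqrt n ≤ |v i|) ∧
      (1 - 2 * θ) * opNorm A ≤ ∑ i, (∑ j, A i j * u j) * v i ∧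
      (1 - 2 * θ) * opNorm A ≤ (∑ i, |u i|) * (∑ i, |v i|) ∧
      (Real.sqrt ((1 - 2 * θ) * opNorm A) ≤ ∑ i, |u i| ∨
        Real.sqrt ((1 - 2 * θ) * opNorm A) ≤ ∑ i, |v i|) := by
  have hn : 0 < n := by
    rcases Nat.eq_zero_or_pos n with h | h
    · exfalso; apply hA; subst h; ext i j; exact i.elim0
    · exact h
  set T := LinearMap.toContinuousLinearMap (Matrix.toEuclideanLin A) with hT
  have hNT : opNorm A = ‖T‖ := rfl
  have hN0 : 0 < opNorm A := by
    rw [hNT, norm_pos_iff]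
    intro h
    apply hA
    have h2 : Matrix.toEuclideanLin A = 0 := by
      rwa [hT, EmbeddingLike.map_eq_zero_iff] at h
    rwa [EmbeddingLike.map_eq_zero_iff] at h2
  set t := θ / Real.sqrt n with htdef
  have hsn : 0 < Real.sqrt n := Real.sqrt_pos.mpr (Nat.cast_pos.mpr hn)
  have ht : 0 < t := div_pos hθ0 hsn
  have hst : Real.sqrt n * t = θ := by
    rw [htdef]; field_simp
  obtain ⟨x, hx1, hxN⟩ := exists_norm_attained hn T
  set u := trunc x t with hu
  have hu_norm : ‖u‖ ≤ 1 := (trunc_norm_le x t).trans_eq hx1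
  have hxu : ‖x - u‖ ≤ θ := by
    have := trunc_diff_le x t ht.le
    rwa [hst] at this
  have hTu : (1 - θ) * opNorm A ≤ ‖T u‖ := by
    have h1 : ‖T x - T u‖ ≤ opNorm A * θ := by
      rw [← map_sub]
      calc ‖T (x - u)‖ ≤ ‖T‖ * ‖x - u‖ := T.le_opNorm _
      _ ≤ opNorm A * θ := by rw [hNT]; exact mul_le_mul_of_nonneg_left hxu (norm_nonneg T)
    have h2 := norm_sub_norm_le (T x) (T u)
    rw [hxN, ← hNT] at h2
    nlinarith
  have hTu0 : 0 < ‖T u‖ := lt_of_lt_of_le (by nlinarith) hTu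
  set w := ‖T u‖⁻¹ • (T u) with hwdef
  have hw1 : ‖w‖ = 1 := by
    rw [hwdef, norm_smul, norm_inv, norm_norm, inv_mul_cancel₀ hTu0.ne']
  set v := trunc w t with hv
  have hv_norm : ‖v‖ ≤ 1 := (trunc_norm_le w t).trans_eq hw1
  have hwv : ‖w - v‖ ≤ θ := by
    have := trunc_diff_le w t ht.le
    rwa [hst] at this
  have hinner : (1 - 2 * θ) * opNorm A ≤ ⟪T u, v⟫ := by
    have e1 : ⟪T u, w⟫ = ‖T u‖ := by
      rw [hwdef, real_inner_smul_right, real_inner_self_eq_norm_sq]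
      field_simp
    have e2 : ⟪T u, w - v⟫ ≤ ‖T u‖ * θ :=
      (real_inner_le_norm _ _).trans (mul_le_mul_of_nonneg_left hwv hTu0.le)
    have e3 : ⟪T u, v⟫ = ⟪T u, w⟫ - ⟪T u, w - v⟫ := by
      rw [inner_sub_right]; ring
    nlinarith [hN0, hTu, sq_nonneg θ]
  have hTui : ∀ i, (T u) i = ∑ j, A i j * u j := by
    intro i
    rfl
  have hsum : ⟪T u, v⟫ = ∑ i, (∑ j, A i j * u j) * v i := by
    rw [PiLp.inner_apply]
    refine Finset.sum_congr rfl fun i _ => ?_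
    rw [RCLike.inner_apply, conj_trivial, hTui i, mul_comm]
  have hbound : ∑ i, (∑ j, A i j * u j) * v i ≤ (∑ i, |u i|) * (∑ i, |v i|) := by
    calc ∑ i, (∑ j, A i j * u j) * v i ≤ ∑ i, (∑ j, |u j|) * |v i| := by
          refine Finset.sum_le_sum fun i _ => ?_
          calc (∑ j, A i j * u j) * v i ≤ |(∑ j, A i j * u j) * v i| := le_abs_self _
          _ = |∑ j, A i j * u j| * |v i| := abs_mul _ _
          _ ≤ (∑ j, |u j|) * |v i| := by
              refine mul_le_mul_of_nonneg_right ?_ (abs_nonneg _)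
              calc |∑ j, A i j * u j| ≤ ∑ j, |A i j * u j| := Finset.abs_sum_le_sum_abs _ _
              _ ≤ ∑ j, |u j| := by
                  refine Finset.sum_le_sum fun j _ => ?_
                  rw [abs_mul]
                  exact mul_le_of_le_one_left (abs_nonneg _) (hAinf i j)
    _ = (∑ i, |u i|) * (∑ i, |v i|) := by rw [← Finset.mul_sum]
  have goal5 : (1 - 2 * θ) * opNorm A ≤ ∑ i, (∑ j, A i j * u j) * v i := hsum ▸ hinner
  have goal6 : (1 - 2 * θ) * opNorm A ≤ (∑ i, |u i|) * (∑ i, |v i|) := goal5.trans hbound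
  refine ⟨u, v, ?_, ?_, ?_, ?_, goal5, goal6, ?_⟩
  · rw [← euclid_norm_eq]; exact hu_norm
  · rw [← euclid_norm_eq]; exact hv_norm
  · intro i hi
    rw [hu] at hi ⊢
    simp only [trunc, WithLp.ofLp_toLp] at hi ⊢
    by_cases h : |x i| < t
    · exact absurd (if_pos h) hi
    · rw [if_neg h]; exact le_of_not_gt h
  · intro i hi
    rw [hv] at hi ⊢
    simp only [trunc, WithLp.ofLp_toLp] at hi ⊢
    by_cases h : |w i| < t
    · exact absurd (if_pos h) hi
    · rw [if_neg h]; exact le_of_not_gt h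
  · by_contra hcon
    push_neg at hcon
    obtain ⟨h1, h2⟩ := hcon
    have hs0 : 0 ≤ (1 - 2 * θ) * opNorm A := mul_nonneg (by linarith) hN0.le
    have hnu : 0 ≤ ∑ i, |u i| := Finset.sum_nonneg fun i _ => abs_nonneg _
    have hnv : 0 ≤ ∑ i, |v i| := Finset.sum_nonneg fun i _ => abs_nonneg _
    have := mul_lt_mul'' h1 h2 hnu hnv
    rw [Real.mul_self_sqrt hs0] at this
    exact absurd goal6 (not_le.mpr this)
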